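/- In the Hilbert flying saucer X with induced length metric d, let x_n = 2^{n-1/2}(e_{2^n} + e_{2^n+1}), so that ‖x_n‖ = 2^n and x_n ∈ X. Then for all i ≤ j one has (x_i | x_j)_0 ≥ 2^i (1 - 1/√2); in particular (x_n) is a Gromov sequence in X and the Gromov boundary of X is nonempty. -/

import Mathlib

/-- `ℓ²`, the Hilbert space of square-summable real sequences. -/
noncomputable abbrev ell2 : Type := lp (fun _ : ℕ => ℝ) 2

/-- The disk `Y_i` (here indexed from `0`, so `saucerY i` is the paper's `Y_{i+1}`):
elements of norm at most `i+1` whose first `i` coordinates vanish. -/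
def saucerY (i : ℕ) : Set ell2 :=
  {x : ell2 | ‖x‖ ≤ (i : ℝ) + 1 ∧ ∀ j < i, x j = 0}

/-- The Hilbert flying saucer `X = ⋃ᵢ Yᵢ ⊆ ℓ²`. -/
def saucer : Set ell2 := ⋃ i : ℕ, saucerY i

/-- The induced length (inner) metric on a subset `X` of a normed space: the infimum of
lengths (total variations) of continuous paths in `X` joining `u` to `v`. -/
noncomputable def lengthDist {E : Type*} [NormedAddCommGroup E] [NormedSpace ℝ E]
    (X : Set E) (u v : E) : ENNReal :=
  ⨅ (γ : ℝ → E) (_ : ContinuousOn γ (Set.Icc 0 1)) (_ : γ 0 = u) (_ : γ 1 = v)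
    (_ : Set.MapsTo γ (Set.Icc 0 1) X), eVariationOn γ (Set.Icc 0 1)

open Filter

/-- The sequence `x n = 2^{n - 1/2}(e_{2^n} + e_{2^n+1})` in `ℓ²`.  (Coordinates are
indexed from 0 here, so `e_k` is `lp.single 2 k 1`.) -/
noncomputable def xseq (n : ℕ) : ell2 :=
  ((2 : ℝ) ^ n / Real.sqrt 2) •
    (lp.single 2 (2 ^ n) (1 : ℝ) + lp.single 2 (2 ^ n + 1) (1 : ℝ))

open Set RealInnerProductSpace

section GeneralLength

variable {E : Type*} [NormedAddCommGroup E] [NormedSpace ℝ E]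

theorem lip_affine (u d : E) : LipschitzWith ‖d‖₊ (fun s : ℝ => u + s • d) := by
  apply LipschitzWith.of_dist_le_mul
  intro x y
  simp only [dist_eq_norm, add_sub_add_left_eq_sub, ← sub_smul, norm_smul, Real.norm_eq_abs]
  rw [coe_nnnorm, mul_comm]

theorem evar_affine (u d : E) {c a b : ℝ} (hc : 0 ≤ c) (hab : a ≤ b) :
    eVariationOn (fun t : ℝ => u + (c * t) • d) (Icc a b) ≤
      ENNReal.ofReal (c * ‖d‖ * (b - a)) := by
  have hcomp : (fun t : ℝ => u + (c * t) • d) = (fun s : ℝ => u + s • d) ∘ (fun t : ℝ => c * t) :=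
    rfl
  rw [hcomp]
  refine le_trans ((lip_affine u d).lipschitzOnWith.comp_eVariationOn_le (mapsTo_univ _ _)) ?_
  have hmono : MonotoneOn (fun t : ℝ => c * t) (Icc a b) := fun x _ y _ hxy =>
    mul_le_mul_of_nonneg_left hxy hc
  have h1 : eVariationOn (fun t : ℝ => c * t) (Icc a b) ≤ ENNReal.ofReal (c * b - c * a) := by
    have := hmono.eVariationOn_le (left_mem_Icc.2 hab) (right_mem_Icc.2 hab)
    simpa [Set.inter_self] using this
  calc (‖d‖₊ : ENNReal) * eVariationOn (fun t : ℝ => c * t) (Icc a b)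
      ≤ (‖d‖₊ : ENNReal) * ENNReal.ofReal (c * b - c * a) := by gcongr
    _ = ENNReal.ofReal (c * ‖d‖ * (b - a)) := by
        rw [show ((‖d‖₊ : ENNReal)) = ENNReal.ofReal ‖d‖ from (ofReal_norm d).symm, ← ENNReal.ofReal_mul (norm_nonneg d)]
        ring_nf

theorem lengthDist_le_of_segment {X : Set E} {u v : E} (h : segment ℝ u v ⊆ X) :
    lengthDist X u v ≤ ENNReal.ofReal ‖v - u‖ := by
  set γ : ℝ → E := fun t => u + t • (v - u) with hγ
  have hcont : ContinuousOn γ (Icc 0 1) := by fun_prop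
  have h0 : γ 0 = u := by simp [hγ]
  have h1 : γ 1 = v := by simp [hγ]
  have hmaps : MapsTo γ (Icc 0 1) X := by
    intro t ht
    apply h
    rw [segment_eq_image']
    exact ⟨t, ht, rfl⟩
  refine le_trans (iInf_le_of_le γ (iInf_le_of_le hcont (iInf_le_of_le h0 (iInf_le_of_le h1
    (iInf_le _ hmaps))))) ?_
  have := evar_affine u (v - u) (c := 1) (a := 0) (b := 1) zero_le_one zero_le_one
  simp only [one_mul] at this
  simpa [hγ] using this

theorem lengthDist_ge {X : Set E} (u v : E) :
    ENNReal.ofReal (dist u v) ≤ lengthDist X u v := by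
  refine le_iInf fun γ => le_iInf fun hc => le_iInf fun h0 => le_iInf fun h1 => le_iInf fun hm => ?_
  rw [← edist_dist, ← h0, ← h1]
  exact eVariationOn.edist_le γ (left_mem_Icc.2 zero_le_one) (right_mem_Icc.2 zero_le_one)

theorem lengthDist_le_two_segment {X : Set E} {u w v : E}
    (h1 : segment ℝ u w ⊆ X) (h2 : segment ℝ w v ⊆ X) :
    lengthDist X u v ≤ ENNReal.ofReal (‖w - u‖ + ‖v - w‖) := by
  set γ₁ : ℝ → E := fun t => u + (2 * t) • (w - u) with hγ₁
  set γ₂ : ℝ → E := fun t => (w - (v - w)) + (2 * t) • (v - w) with hγ₂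
  set γ : ℝ → E := fun t => if t ≤ 1/2 then γ₁ t else γ₂ t with hγ
  have hbd : ∀ t : ℝ, t = 1/2 → γ₁ t = γ₂ t := by
    intro t ht
    subst ht
    simp only [hγ₁, hγ₂]
    norm_num
  have hcont : Continuous γ := by
    refine Continuous.if_le ?_ ?_ continuous_id continuous_const hbd <;> fun_prop
  have h0 : γ 0 = u := by norm_num [hγ, hγ₁]
  have h1' : γ 1 = v := by
    simp only [hγ]
    rw [if_neg (by norm_num)]
    simp only [hγ₂]
    norm_num
    module
  have hmaps : MapsTo γ (Icc 0 1) X := by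
    intro t ht
    simp only [hγ]
    split_ifs with h
    · apply h1
      rw [segment_eq_image']
      exact ⟨2 * t, ⟨by linarith [ht.1], by linarith⟩, rfl⟩
    · apply h2
      rw [segment_eq_image']
      refine ⟨2 * t - 1, ⟨by linarith, by linarith [ht.2]⟩, ?_⟩
      simp only [hγ₂]
      rw [sub_smul, one_smul]
      abel
  have hsplit : eVariationOn γ (Icc 0 (1/2)) + eVariationOn γ (Icc (1/2) 1)
      = eVariationOn γ (Icc 0 1) := by
    have := eVariationOn.Icc_add_Icc γ (s := (univ : Set ℝ))
      (a := 0) (b := 1/2) (c := 1) (by norm_num) (by norm_num) (mem_univ _)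
    simpa using this
  have e1 : eVariationOn γ (Icc 0 (1/2)) ≤ ENNReal.ofReal ‖w - u‖ := by
    have heq : EqOn γ γ₁ (Icc 0 (1/2)) := by
      intro t ht
      simp only [hγ, if_pos ht.2]
    rw [eVariationOn.eq_of_eqOn heq]
    calc eVariationOn γ₁ (Icc 0 (1/2)) ≤ ENNReal.ofReal (2 * ‖w - u‖ * (1/2 - 0)) :=
        evar_affine u (w - u) (by norm_num) (by norm_num)
      _ = ENNReal.ofReal ‖w - u‖ := by congr 1; ring
  have e2 : eVariationOn γ (Icc (1/2) 1) ≤ ENNReal.ofReal ‖v - w‖ := by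
    have heq : EqOn γ γ₂ (Icc (1/2) 1) := by
      intro t ht
      simp only [hγ]
      split_ifs with h
      · exact hbd t (le_antisymm h ht.1)
      · rfl
    rw [eVariationOn.eq_of_eqOn heq]
    calc eVariationOn γ₂ (Icc (1/2) 1) ≤ ENNReal.ofReal (2 * ‖v - w‖ * (1 - 1/2)) :=
        evar_affine (w - (v - w)) (v - w) (by norm_num) (by norm_num)
      _ = ENNReal.ofReal ‖v - w‖ := by congr 1; ring
  refine le_trans (iInf_le_of_le γ (iInf_le_of_le hcont.continuousOn (iInf_le_of_le h0
    (iInf_le_of_le h1' (iInf_le _ hmaps))))) ?_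
  rw [← hsplit, ENNReal.ofReal_add (norm_nonneg _) (norm_nonneg _)]
  exact add_le_add e1 e2

end GeneralLength

theorem xseq_apply (n k : ℕ) : (xseq n) k =
    ((2:ℝ)^n / Real.sqrt 2) * ((if k = 2^n then (1:ℝ) else 0) + (if k = 2^n + 1 then 1 else 0)) := by
  simp [xseq, lp.coeFn_smul, lp.coeFn_add, lp.single_apply, mul_add]
  show (2^n / Real.sqrt 2) * (lp.single 2 (2^n) (1:ℝ) : ell2) k + (2^n / Real.sqrt 2) * (lp.single 2 (2^n+1) (1:ℝ) : ell2) k = _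
  simp [lp.single_apply, Pi.single_apply]

theorem xseq_coord_zero {n k : ℕ} (h : k < 2^n) : (xseq n) k = 0 := by
  rw [xseq_apply, if_neg (by omega), if_neg (by omega)]
  ring

theorem xseq_coord_nonneg (n k : ℕ) : 0 ≤ (xseq n) k := by
  rw [xseq_apply]
  have h2 : 0 < Real.sqrt 2 := Real.sqrt_pos.2 (by norm_num)
  split_ifs <;> positivity

theorem norm_single_pair (a b : ℕ) (h : a ≠ b) :
    ‖(lp.single 2 a (1:ℝ) + lp.single 2 b 1 : ell2)‖ = Real.sqrt 2 := by
  have H := lp.norm_sum_single (p := 2) (E := fun _ : ℕ => ℝ) (by norm_num) (fun _ => (1:ℝ)) {a, b}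
  rw [Finset.sum_pair h] at H
  have h2 : ((2:ENNReal)).toReal = (2:ℝ) := by simp
  rw [h2, norm_one, Real.one_rpow] at H
  rw [show ((2:ℝ)) = ((2:ℕ):ℝ) by norm_num, Real.rpow_natCast] at H
  have hn : (0:ℝ) ≤ ‖(lp.single 2 a (1:ℝ) + lp.single 2 b 1 : ell2)‖ := norm_nonneg _
  rw [← Real.sqrt_sq hn, H]
  simp [Finset.card_pair h]

theorem sqrt2_pos : (0:ℝ) < Real.sqrt 2 := Real.sqrt_pos.2 (by norm_num)

theorem norm_xseq (n : ℕ) : ‖xseq n‖ = 2 ^ n := by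
  rw [xseq, norm_smul, norm_single_pair _ _ (by omega), Real.norm_eq_abs,
    abs_of_nonneg (by positivity)]
  field_simp

theorem mem_saucer_of {f : ell2} (k : ℕ) (h1 : ‖f‖ ≤ 2 ^ k)
    (h2 : ∀ j < 2 ^ k, f j = 0) : f ∈ saucer := by
  refine Set.mem_iUnion.2 ⟨2 ^ k, ?_, ?_⟩
  · push_cast
    linarith
  · exact_mod_cast h2

theorem smul_xseq_mem {n : ℕ} {a : ℝ} (h0 : 0 ≤ a) (h1 : a ≤ 1) : a • xseq n ∈ saucer := by
  refine mem_saucer_of n ?_ ?_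
  · rw [norm_smul, Real.norm_eq_abs, abs_of_nonneg h0, norm_xseq]
    nlinarith [pow_pos (show (0:ℝ) < 2 by norm_num) n]
  · intro j hj
    have : (a • xseq n) j = a * (xseq n) j := by
      rw [lp.coeFn_smul]; rfl
    rw [this, xseq_coord_zero hj, mul_zero]

theorem inner_xseq_nonneg (m n : ℕ) : 0 ≤ ⟪xseq m, xseq n⟫ := by
  rw [xseq, real_inner_smul_left, inner_add_left, lp.inner_single_left, lp.inner_single_left]
  have h1 := xseq_coord_nonneg n (2^m)
  have h2 := xseq_coord_nonneg n (2^m + 1)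
  have h3 : (0:ℝ) ≤ (2:ℝ)^m / Real.sqrt 2 := by positivity
  simp only [RCLike.inner_apply, starRingEnd_apply, star_trivial, one_mul]
  positivity

theorem pow_le_pow2 {i j : ℕ} (hij : i ≤ j) : (2:ℝ)^i ≤ 2^j :=
  pow_le_pow_right₀ (by norm_num) hij

theorem norm_q {i j : ℕ} (hij : i ≤ j) : ‖(((2:ℝ)^i / 2^j) • xseq j : ell2)‖ = 2^i := by
  rw [norm_smul, Real.norm_eq_abs, abs_of_nonneg (by positivity), norm_xseq]
  field_simp

theorem seg_iq {i j : ℕ} (hij : i ≤ j) :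
    segment ℝ (xseq i) (((2:ℝ)^i / 2^j) • xseq j) ⊆ saucer := by
  rintro z ⟨a, b, ha, hb, hab, rfl⟩
  refine mem_saucer_of i ?_ ?_
  · calc ‖a • xseq i + b • (((2:ℝ)^i / 2^j) • xseq j)‖
        ≤ ‖a • xseq i‖ + ‖b • (((2:ℝ)^i / 2^j) • xseq j)‖ := norm_add_le _ _
      _ = a * 2^i + b * 2^i := by
          rw [norm_smul, norm_smul, Real.norm_eq_abs, Real.norm_eq_abs, abs_of_nonneg ha,
            abs_of_nonneg hb, norm_xseq, norm_q hij]
      _ = 2^i := by rw [← add_mul, hab, one_mul]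
  · intro k hk
    have hki : (xseq i) k = 0 := xseq_coord_zero hk
    have hkj : (xseq j) k = 0 := xseq_coord_zero (lt_of_lt_of_le hk (by
      exact_mod_cast Nat.pow_le_pow_right (by norm_num) hij))
    have : (a • xseq i + b • (((2:ℝ)^i / 2^j) • xseq j)) k
        = a * (xseq i) k + b * (((2:ℝ)^i / 2^j) * (xseq j) k) := by
      rw [lp.coeFn_add, lp.coeFn_smul, lp.coeFn_smul, lp.coeFn_smul]
      rfl
    rw [this, hki, hkj]
    ring

theorem seg_qj {i j : ℕ} (hij : i ≤ j) :
    segment ℝ (((2:ℝ)^i / 2^j) • xseq j) (xseq j) ⊆ saucer := by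
  rintro z ⟨a, b, ha, hb, hab, rfl⟩
  have hr0 : (0:ℝ) ≤ 2^i / 2^j := by positivity
  have hr1 : (2:ℝ)^i / 2^j ≤ 1 := by
    rw [div_le_one (by positivity)]
    exact pow_le_pow2 hij
  have : a • (((2:ℝ)^i / 2^j) • xseq j) + b • xseq j = (a * (2^i / 2^j) + b) • xseq j := by
    rw [smul_smul, add_smul]
  rw [this]
  exact smul_xseq_mem (by positivity) (by nlinarith)

theorem norm_q_sub_xi {i j : ℕ} (hij : i ≤ j) :
    ‖(((2:ℝ)^i / 2^j) • xseq j : ell2) - xseq i‖ ≤ 2^i * Real.sqrt 2 := by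
  set q : ell2 := ((2:ℝ)^i / 2^j) • xseq j with hq
  have hin : (0:ℝ) ≤ ⟪q, xseq i⟫ := by
    rw [hq, real_inner_smul_left]
    have := inner_xseq_nonneg j i
    positivity
  have hsq : ‖q - xseq i‖^2 ≤ 2 * (2^i)^2 := by
    rw [norm_sub_sq_real, norm_q hij, norm_xseq]
    nlinarith
  have h1 : ‖q - xseq i‖ = Real.sqrt (‖q - xseq i‖^2) := (Real.sqrt_sq (norm_nonneg _)).symm
  rw [h1]
  have h2 : (2:ℝ) * (2^i)^2 = (2^i * Real.sqrt 2)^2 := by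
    have : Real.sqrt 2 ^ 2 = 2 := Real.sq_sqrt (by norm_num)
    nlinarith
  calc Real.sqrt (‖q - xseq i‖^2) ≤ Real.sqrt ((2^i * Real.sqrt 2)^2) := by
        apply Real.sqrt_le_sqrt
        rw [← h2]
        exact hsq
    _ = 2^i * Real.sqrt 2 := Real.sqrt_sq (by positivity)

theorem norm_xj_sub_q {i j : ℕ} (hij : i ≤ j) :
    ‖xseq j - (((2:ℝ)^i / 2^j) • xseq j : ell2)‖ = 2^j - 2^i := by
  have h : xseq j - ((2:ℝ)^i / 2^j) • xseq j = (1 - (2:ℝ)^i / 2^j) • xseq j := by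
    module
  have hr1 : (2:ℝ)^i / 2^j ≤ 1 := by
    rw [div_le_one (by positivity)]
    exact pow_le_pow2 hij
  rw [h, norm_smul (1 - (2:ℝ)^i / 2^j) (xseq j), Real.norm_eq_abs,
    abs_of_nonneg (by linarith), norm_xseq]
  field_simp

theorem seg_zero (n : ℕ) : segment ℝ (xseq n) 0 ⊆ saucer := by
  rintro z ⟨a, b, ha, hb, hab, rfl⟩
  rw [smul_zero, add_zero]
  exact smul_xseq_mem ha (by linarith)

theorem d0_toReal (n : ℕ) : (lengthDist saucer (xseq n) 0).toReal = 2 ^ n := by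
  have heq : lengthDist saucer (xseq n) 0 = ENNReal.ofReal (2 ^ n) := by
    apply le_antisymm
    · have := lengthDist_le_of_segment (seg_zero n)
      rwa [zero_sub, norm_neg, norm_xseq] at this
    · have := lengthDist_ge (X := saucer) (xseq n) 0
      rwa [dist_zero_right, norm_xseq] at this
  rw [heq, ENNReal.toReal_ofReal (by positivity)]

theorem dij_le (i j : ℕ) (hij : i ≤ j) :
    (lengthDist saucer (xseq i) (xseq j)).toReal ≤ 2^i * Real.sqrt 2 + (2^j - 2^i) ∧
    (lengthDist saucer (xseq j) (xseq i)).toReal ≤ 2^i * Real.sqrt 2 + (2^j - 2^i) := by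
  set q : ell2 := ((2:ℝ)^i / 2^j) • xseq j with hq
  have hB : (0:ℝ) ≤ 2^i * Real.sqrt 2 + (2^j - 2^i) := by
    have h1 := pow_le_pow2 hij
    have h2 : (0:ℝ) ≤ 2^i * Real.sqrt 2 := by positivity
    linarith
  have hnorms : ‖q - xseq i‖ + ‖xseq j - q‖ ≤ 2^i * Real.sqrt 2 + (2^j - 2^i) := by
    have h1 := norm_q_sub_xi hij
    have h2 := norm_xj_sub_q hij
    rw [← hq] at h1 h2
    linarith [le_of_eq h2]
  constructor
  · have h := lengthDist_le_two_segment (seg_iq hij) (seg_qj hij)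
    exact ENNReal.toReal_le_of_le_ofReal hB (h.trans (ENNReal.ofReal_le_ofReal hnorms))
  · have hs1 : segment ℝ (xseq j) q ⊆ saucer := by
      rw [segment_symm]
      exact seg_qj hij
    have hs2 : segment ℝ q (xseq i) ⊆ saucer := by
      rw [segment_symm]
      exact seg_iq hij
    have h := lengthDist_le_two_segment hs1 hs2
    rw [norm_sub_rev q (xseq j), norm_sub_rev (xseq i) q] at h
    refine ENNReal.toReal_le_of_le_ofReal hB (h.trans (ENNReal.ofReal_le_ofReal ?_))
    linarith

theorem gromov_ge (i j : ℕ) (hij : i ≤ j) :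
    ((2:ℝ)^i * (1 - 1 / Real.sqrt 2) ≤
      ((lengthDist saucer (xseq i) 0).toReal + (lengthDist saucer (xseq j) 0).toReal -
        (lengthDist saucer (xseq i) (xseq j)).toReal) / 2) ∧
    ((2:ℝ)^i * (1 - 1 / Real.sqrt 2) ≤
      ((lengthDist saucer (xseq j) 0).toReal + (lengthDist saucer (xseq i) 0).toReal -
        (lengthDist saucer (xseq j) (xseq i)).toReal) / 2) := by
  have hd := dij_le i j hij
  have hhalf : (1:ℝ) / Real.sqrt 2 = Real.sqrt 2 / 2 := by
    rw [div_eq_div_iff sqrt2_pos.ne' (by norm_num : (2:ℝ) ≠ 0), one_mul,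
      Real.mul_self_sqrt (by norm_num)]
  rw [d0_toReal, d0_toReal]
  have hp : (0:ℝ) < 2^i := by positivity
  constructor
  · have := hd.1
    rw [hhalf]
    nlinarith
  · have := hd.2
    rw [hhalf]
    nlinarith

/-- Each `x n` lies in the flying saucer and has norm `2^n`; for `i ≤ j` the Gromov
product (for the induced length metric `d`, basepoint `0`) satisfies
`(x_i | x_j)_0 ≥ 2^i (1 - 1/√2)`; in particular `(x n)` is a Gromov sequence in `X`,
so the Gromov boundary of `X` is nonempty. -/
theorem stmt_13 :
    (∀ n : ℕ, xseq n ∈ saucer ∧ ‖xseq n‖ = 2 ^ n) ∧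
    (∀ i j : ℕ, i ≤ j →
      (2 : ℝ) ^ i * (1 - 1 / Real.sqrt 2) ≤
        ((lengthDist saucer (xseq i) 0).toReal + (lengthDist saucer (xseq j) 0).toReal -
          (lengthDist saucer (xseq i) (xseq j)).toReal) / 2) ∧
    Tendsto
      (fun p : ℕ × ℕ =>
        ((lengthDist saucer (xseq p.1) 0).toReal + (lengthDist saucer (xseq p.2) 0).toReal -
          (lengthDist saucer (xseq p.1) (xseq p.2)).toReal) / 2)
      atTop atTop := by
  have hc : (0:ℝ) < 1 - 1 / Real.sqrt 2 := by
    have h12 : (1:ℝ) < Real.sqrt 2 := by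
      rw [show (1:ℝ) = Real.sqrt 1 by simp]
      exact Real.sqrt_lt_sqrt (by norm_num) (by norm_num)
    have : (1:ℝ) / Real.sqrt 2 < 1 := (div_lt_one sqrt2_pos).2 h12
    linarith
  refine ⟨fun n => ⟨?_, norm_xseq n⟩, fun i j hij => (gromov_ge i j hij).1, ?_⟩
  · exact mem_saucer_of n (le_of_eq (norm_xseq n)) (fun j hj => xseq_coord_zero hj)
  · have hlb : ∀ p : ℕ × ℕ, (2:ℝ)^(min p.1 p.2) * (1 - 1 / Real.sqrt 2) ≤
        ((lengthDist saucer (xseq p.1) 0).toReal + (lengthDist saucer (xseq p.2) 0).toReal -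
          (lengthDist saucer (xseq p.1) (xseq p.2)).toReal) / 2 := by
      intro p
      rcases le_total p.1 p.2 with h | h
      · rw [min_eq_left h]
        exact (gromov_ge p.1 p.2 h).1
      · rw [min_eq_right h]
        exact (gromov_ge p.2 p.1 h).2
    rw [tendsto_atTop]
    intro b
    obtain ⟨N, hN⟩ := pow_unbounded_of_one_lt (b / (1 - 1 / Real.sqrt 2)) (y := (2:ℝ)) one_lt_two
    have hbN : b ≤ 2 ^ N * (1 - 1 / Real.sqrt 2) := by
      rw [div_lt_iff₀ hc] at hN
      linarith
    filter_upwards [eventually_ge_atTop (N, N)] with p hp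
    have h1 : N ≤ min p.1 p.2 := le_min hp.1 hp.2
    have h2 : (2:ℝ)^N ≤ 2^(min p.1 p.2) := pow_le_pow2 h1
    calc b ≤ 2 ^ N * (1 - 1 / Real.sqrt 2) := hbN
      _ ≤ 2 ^ (min p.1 p.2) * (1 - 1 / Real.sqrt 2) := by nlinarith
      _ ≤ _ := hlb p
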